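/- Let μ⁺ = μ⁻ = μ > 0 and let (v⁺, v⁻, q⁺, q⁻) be a local IFE pair on a cut triangle (T, D, E) as in the setup. Then v⁺ = v⁻ as affine maps on ℝ² and q⁺ = q⁻; that is, when the viscosity has no jump, the immersed CR–P₀ shape functions reduce to globally affine velocities and constant pressures (the standard CR–P₀ element). -/
import Mathlib


open MeasureTheory

noncomputable section

namespace StokesIFE

/-- Euclidean inner product on `ℝ²`. -/
def dot (x y : Fin 2 → ℝ) : ℝ := x 0 * y 0 + x 1 * y 1

/-- Euclidean length of a vector of `ℝ²`. -/
def len (x : Fin 2 → ℝ) : ℝ := Real.sqrt (dot x x)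

/-- Strain tensor `ε(A) = (A + Aᵀ)/2`. -/
def eps (A : Matrix (Fin 2) (Fin 2) ℝ) : Matrix (Fin 2) (Fin 2) ℝ :=
  (2⁻¹ : ℝ) • (A + A.transpose)

/-- Cauchy stress tensor `σ(μ, A, q) = 2 μ ε(A) − q I₂`. -/
def sig (μ : ℝ) (A : Matrix (Fin 2) (Fin 2) ℝ) (q : ℝ) : Matrix (Fin 2) (Fin 2) ℝ :=
  (2 * μ) • eps A - q • (1 : Matrix (Fin 2) (Fin 2) ℝ)

/-- Mean value of `u` over the segment `[P, Q]` with respect to arclength,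
expressed through the affine parametrization of the segment. -/
def edgeMean (P Q : Fin 2 → ℝ) (u : (Fin 2 → ℝ) → ℝ) : ℝ :=
  ∫ s in (0:ℝ)..1, u (P + s • (Q - P))

/-- Two-dimensional Lebesgue area of a subset of `ℝ²`. -/
def area (s : Set (Fin 2 → ℝ)) : ℝ := (volume s).toReal

/-- Squared Frobenius norm of a 2×2 matrix. -/
def frobSq (A : Matrix (Fin 2) (Fin 2) ℝ) : ℝ := ∑ i : Fin 2, ∑ j : Fin 2, (A i j) ^ 2

/-- A triangle `T = conv{A₁, A₂, A₃}` cut by the segment `[D, E]`, where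
`D` lies in the open edge `(A₂, A₃)`, `E` lies in the open edge `(A₁, A₃)`,
and `n` is the unit normal of `E − D` pointing towards `A₃`. -/
structure CutTriangle where
  A₁ : Fin 2 → ℝ
  A₂ : Fin 2 → ℝ
  A₃ : Fin 2 → ℝ
  D : Fin 2 → ℝ
  E : Fin 2 → ℝ
  n : Fin 2 → ℝ
  indep : AffineIndependent ℝ ![A₁, A₂, A₃]
  hD : D ∈ openSegment ℝ A₂ A₃
  hE : E ∈ openSegment ℝ A₁ A₃
  hn_unit : dot n n = 1
  hn_orth : dot n (E - D) = 0
  hn_sign : 0 < dot n (A₃ - D)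

namespace CutTriangle

variable (c : CutTriangle)

/-- Tangent vector `t = (n₂, −n₁)`, the rotation of `n` by `−π/2`. -/
def t : Fin 2 → ℝ := ![c.n 1, -(c.n 0)]

/-- The closed triangle. -/
def T : Set (Fin 2 → ℝ) := convexHull ℝ {c.A₁, c.A₂, c.A₃}

/-- The part of the triangle on the `+` side of the cut. -/
def Tplus : Set (Fin 2 → ℝ) := c.T ∩ {x | 0 ≤ dot c.n (x - c.D)}

/-- The part of the triangle on the `−` side of the cut. -/
def Tminus : Set (Fin 2 → ℝ) := c.T ∩ {x | dot c.n (x - c.D) ≤ 0}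

/-- The piecewise linear function `w(x) = max(⟨n, x − D⟩, 0)`. -/
def w (x : Fin 2 → ℝ) : ℝ := max (dot c.n (x - c.D)) 0

/-- `(g, b)` represents the Crouzeix–Raviart interpolant `x ↦ ⟨g, x⟩ + b` of `u` on `T`:
an affine map whose mean value over each of the three edges coincides with that of `u`. -/
def IsCR (u : (Fin 2 → ℝ) → ℝ) (g : Fin 2 → ℝ) (b : ℝ) : Prop :=
  edgeMean c.A₂ c.A₃ (fun x => dot g x + b) = edgeMean c.A₂ c.A₃ u ∧
  edgeMean c.A₁ c.A₃ (fun x => dot g x + b) = edgeMean c.A₁ c.A₃ u ∧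
  edgeMean c.A₁ c.A₂ (fun x => dot g x + b) = edgeMean c.A₁ c.A₂ u

/-- The componentwise Crouzeix–Raviart interpolant `x ↦ Mπ x + bπ` of a vector-valued `u`. -/
def IsCRvec (u : (Fin 2 → ℝ) → Fin 2 → ℝ) (Mπ : Matrix (Fin 2) (Fin 2) ℝ)
    (bπ : Fin 2 → ℝ) : Prop :=
  ∀ j : Fin 2, c.IsCR (fun x => u x j) (Mπ j) (bπ j)

/-- The piecewise velocity: `x ↦ Mp x + bp` on the `+` side and `x ↦ Mm x + bm`
on the `−` side. -/
def vtilde (Mp : Matrix (Fin 2) (Fin 2) ℝ) (bp : Fin 2 → ℝ)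
    (Mm : Matrix (Fin 2) (Fin 2) ℝ) (bm : Fin 2 → ℝ) (x : Fin 2 → ℝ) : Fin 2 → ℝ :=
  if 0 ≤ dot c.n (x - c.D) then Mp.mulVec x + bp else Mm.mulVec x + bm

/-- The seven local degrees of freedom: edge means of the two velocity components over
the edges `e₁ = [A₂,A₃]`, `e₂ = [A₁,A₃]`, `e₃ = [A₁,A₂]`, and the mean of the
piecewise-constant pressure over `T`. -/
def dof (Mp : Matrix (Fin 2) (Fin 2) ℝ) (bp : Fin 2 → ℝ)
    (Mm : Matrix (Fin 2) (Fin 2) ℝ) (bm : Fin 2 → ℝ) (qp qm : ℝ) : Fin 7 → ℝ :=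
  ![edgeMean c.A₂ c.A₃ (fun x => c.vtilde Mp bp Mm bm x 0),
    edgeMean c.A₁ c.A₃ (fun x => c.vtilde Mp bp Mm bm x 0),
    edgeMean c.A₁ c.A₂ (fun x => c.vtilde Mp bp Mm bm x 0),
    edgeMean c.A₂ c.A₃ (fun x => c.vtilde Mp bp Mm bm x 1),
    edgeMean c.A₁ c.A₃ (fun x => c.vtilde Mp bp Mm bm x 1),
    edgeMean c.A₁ c.A₂ (fun x => c.vtilde Mp bp Mm bm x 1),
    (area c.Tplus * qp + area c.Tminus * qm) / area c.T]

/-- A local IFE pair: affine velocities `v± = Mp/Mm · x + bp/bm` and constant pressures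
`q±` satisfying the stress-jump condition (J1), continuity of the velocity on `[D,E]` (J2)
and continuity of the divergence (J3). -/
def IsIFEPair (μp μm : ℝ) (Mp : Matrix (Fin 2) (Fin 2) ℝ) (bp : Fin 2 → ℝ)
    (Mm : Matrix (Fin 2) (Fin 2) ℝ) (bm : Fin 2 → ℝ) (qp qm : ℝ) : Prop :=
  (sig μp Mp qp).mulVec c.n = (sig μm Mm qm).mulVec c.n ∧
  (∀ x ∈ segment ℝ c.D c.E, Mp.mulVec x + bp = Mm.mulVec x + bm) ∧
  Mp.trace = Mm.trace

/-- The diameter of the triangle (its longest edge). -/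
def hT : ℝ := max (len (c.A₂ - c.A₁)) (max (len (c.A₃ - c.A₁)) (len (c.A₃ - c.A₂)))

/-- The perimeter of the triangle. -/
def perim : ℝ := len (c.A₂ - c.A₁) + len (c.A₃ - c.A₁) + len (c.A₃ - c.A₂)

/-- The inradius of the triangle, `r_T = 2|T| / perimeter`. -/
def rT : ℝ := 2 * area c.T / c.perim

/-- `ϱ`-shape-regularity: `h_T ≤ ϱ r_T`. -/
def ShapeReg (ϱ : ℝ) : Prop := c.hT ≤ ϱ * c.rT

/-- Arclength of the part of the edge `[P,Q]` lying on the `+` side of the cut. -/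
def edgeLenPlus (P Q : Fin 2 → ℝ) : ℝ :=
  len (Q - P) *
    (volume {s : ℝ | s ∈ Set.Icc (0:ℝ) 1 ∧ 0 ≤ dot c.n (P + s • (Q - P) - c.D)}).toReal

/-- Arclength of the part of the edge `[P,Q]` lying on the `−` side of the cut. -/
def edgeLenMinus (P Q : Fin 2 → ℝ) : ℝ :=
  len (Q - P) *
    (volume {s : ℝ | s ∈ Set.Icc (0:ℝ) 1 ∧ dot c.n (P + s • (Q - P) - c.D) ≤ 0}).toReal

/-- Total arclength of `∂T ∩ T⁺`. -/
def bdryLenPlus : ℝ :=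
  c.edgeLenPlus c.A₂ c.A₃ + c.edgeLenPlus c.A₁ c.A₃ + c.edgeLenPlus c.A₁ c.A₂

/-- Total arclength of `∂T ∩ T⁻`. -/
def bdryLenMinus : ℝ :=
  c.edgeLenMinus c.A₂ c.A₃ + c.edgeLenMinus c.A₁ c.A₃ + c.edgeLenMinus c.A₁ c.A₂

end CutTriangle


theorem statement13_key (μ : ℝ) (hμ : 0 < μ) (a b cc d δ n0 n1 τ0 τ1 : ℝ)
    (hn : n0^2 + n1^2 = 1) (hno : n0*τ0 + n1*τ1 = 0) (hτ : 0 < τ0^2 + τ1^2)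
    (htr : a + d = 0) (hta : a*τ0 + b*τ1 = 0) (htb : cc*τ0 + d*τ1 = 0)
    (hj1 : 2*μ*a*n0 + μ*(b+cc)*n1 - δ*n0 = 0)
    (hj2 : μ*(b+cc)*n0 + 2*μ*d*n1 - δ*n1 = 0) :
    a = 0 ∧ b = 0 ∧ cc = 0 ∧ d = 0 ∧ δ = 0 := by
  set s := τ0*n1 - τ1*n0 with hs_def
  have hs2 : s^2 = τ0^2 + τ1^2 := by
    linear_combination (τ0^2+τ1^2)*hn - (n0*τ0+n1*τ1)*hno
  have hs : s ≠ 0 := by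
    intro h; rw [h] at hs2; nlinarith
  have hτ0 : τ0 = s*n1 := by linear_combination n0*hno - τ0*hn
  have hτ1 : τ1 = -(s*n0) := by linear_combination n1*hno - τ1*hn
  have hA : a*n1 - b*n0 = 0 := by
    have h' : s*(a*n1 - b*n0) = 0 := by
      linear_combination hta - a*hτ0 - b*hτ1
    exact (mul_eq_zero.mp h').resolve_left hs
  have hB : cc*n1 - d*n0 = 0 := by
    have h' : s*(cc*n1 - d*n0) = 0 := by
      linear_combination htb - cc*hτ0 - d*hτ1
    exact (mul_eq_zero.mp h').resolve_left hs
  have hd : d = -a := by linarith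
  subst hd
  have h0 : (a*n0^2 + (b+cc)*n0*n1 + (-a)*n1^2)*n0 = 0 := by
    linear_combination - (n0*n1)*hA + n0^2*hB
  have h1 : (a*n0^2 + (b+cc)*n0*n1 + (-a)*n1^2)*n1 = 0 := by
    linear_combination - n1^2*hA + (n0*n1)*hB
  have hun : a*n0^2 + (b+cc)*n0*n1 + (-a)*n1^2 = 0 := by
    linear_combination n0*h0 + n1*h1 - (a*n0^2+(b+cc)*n0*n1+(-a)*n1^2)*hn
  have hδ : δ = 0 := by
    linear_combination -(n0*hj1) - n1*hj2 + 2*μ*hun - δ*hn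
  have hX : 2*a*n0 + (b+cc)*n1 = 0 := by
    have h' : μ*(2*a*n0 + (b+cc)*n1) = 0 := by linear_combination hj1 + n0*hδ
    exact (mul_eq_zero.mp h').resolve_left (ne_of_gt hμ)
  have hY : (b+cc)*n0 - 2*a*n1 = 0 := by
    have h' : μ*((b+cc)*n0 - 2*a*n1) = 0 := by linear_combination hj2 + n1*hδ
    exact (mul_eq_zero.mp h').resolve_left (ne_of_gt hμ)
  have h4a : 4*a^2 + (b+cc)^2 = 0 := by
    linear_combination (2*a*n0 + (b+cc)*n1)*hX + ((b+cc)*n0 - 2*a*n1)*hY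
      - (4*a^2+(b+cc)^2)*hn
  have ha0 : a = 0 := by
    have h2 : a^2 = 0 := le_antisymm (by nlinarith [sq_nonneg (b+cc)]) (sq_nonneg a)
    exact pow_eq_zero_iff two_ne_zero |>.mp h2
  have hbc : b + cc = 0 := by
    have h2 : (b+cc)^2 = 0 := le_antisymm (by nlinarith [sq_nonneg a]) (sq_nonneg (b+cc))
    exact pow_eq_zero_iff two_ne_zero |>.mp h2
  subst ha0
  have hbn0 : b*n0 = 0 := by linear_combination -hA
  have hbn1 : b*n1 = 0 := by linear_combination n1*hbc - hB
  have hb0 : b = 0 := by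
    have : b^2 = 0 := by linear_combination (b*n0)*hbn0 + (b*n1)*hbn1 - b^2*hn
    exact pow_eq_zero_iff (by norm_num) |>.mp this
  refine ⟨rfl, hb0, by linarith, by ring, hδ⟩

theorem statement13_DE_ne (c : CutTriangle) : c.D ≠ c.E := by
  obtain ⟨p, q, hp, hq, hpq, hDeq⟩ := c.hD
  obtain ⟨r, s, hr, hs, hrs, hEeq⟩ := c.hE
  intro h
  have h0 := affineIndependent_iff.mp c.indep Finset.univ ![r, -p, s - q]
    (by simp [Fin.sum_univ_three]; linarith)
    (by
      simp only [Fin.sum_univ_three, Matrix.cons_val_zero, Matrix.cons_val_one,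
        Matrix.head_cons, Matrix.cons_val_two, Matrix.tail_cons]
      linear_combination (norm := module) hEeq - hDeq - h) 0 (Finset.mem_univ 0)
  simp at h0
  linarith

/-- when the viscosity has no jump (`μ⁺ = μ⁻ = μ > 0`), every local IFE pair
reduces to a globally affine velocity and a constant pressure: `v⁺ = v⁻` as affine maps on
`ℝ²` and `q⁺ = q⁻`. -/
theorem statement13 (c : CutTriangle) (μ : ℝ) (hμ : 0 < μ)
    (Mp Mm : Matrix (Fin 2) (Fin 2) ℝ) (bp bm : Fin 2 → ℝ) (qp qm : ℝ)
    (hIFE : c.IsIFEPair μ μ Mp bp Mm bm qp qm) :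
    (∀ x : Fin 2 → ℝ, Mp.mulVec x + bp = Mm.mulVec x + bm) ∧ qp = qm := by
  obtain ⟨h1, h2, h3⟩ := hIFE
  have e0 := congrFun h1 0
  have e1 := congrFun h1 1
  simp only [sig, eps, Matrix.mulVec, dotProduct, Fin.sum_univ_two, Matrix.one_apply,
    Matrix.transpose_apply, Matrix.sub_apply, Matrix.smul_apply, Matrix.add_apply,
    smul_eq_mul, if_true, if_false, Fin.zero_eta, Fin.isValue, eq_self_iff_true,
    one_ne_zero, zero_ne_one, reduceIte, mul_one, mul_zero] at e0 e1
  have hDm := h2 c.D (left_mem_segment ℝ c.D c.E)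
  have hEm := h2 c.E (right_mem_segment ℝ c.D c.E)
  have hD0 := congrFun hDm 0
  have hD1 := congrFun hDm 1
  have hE0 := congrFun hEm 0
  have hE1 := congrFun hEm 1
  simp only [Matrix.mulVec, dotProduct, Fin.sum_univ_two, Pi.add_apply,
    Fin.isValue] at hD0 hD1 hE0 hE1
  have htr : (Mp 0 0 - Mm 0 0) + (Mp 1 1 - Mm 1 1) = 0 := by
    have := h3
    simp only [Matrix.trace_fin_two] at this
    linarith
  have hn : (c.n 0)^2 + (c.n 1)^2 = 1 := by
    have := c.hn_unit; simp only [dot] at this; linear_combination this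
  have hno : c.n 0 * (c.E 0 - c.D 0) + c.n 1 * (c.E 1 - c.D 1) = 0 := by
    have := c.hn_orth; simp only [dot, Pi.sub_apply] at this; linarith
  have hτ : 0 < (c.E 0 - c.D 0)^2 + (c.E 1 - c.D 1)^2 := by
    rcases lt_or_eq_of_le (by positivity : (0:ℝ) ≤ (c.E 0 - c.D 0)^2 + (c.E 1 - c.D 1)^2)
      with h | h
    · exact h
    · exfalso
      apply statement13_DE_ne c
      have h0 : c.E 0 - c.D 0 = 0 := by
        have hy := sq_nonneg (c.E 1 - c.D 1)
        have hx : (c.E 0 - c.D 0)^2 = 0 := le_antisymm (by linarith) (sq_nonneg _)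
        exact pow_eq_zero_iff two_ne_zero |>.mp hx
      have h1' : c.E 1 - c.D 1 = 0 := by
        have hy := sq_nonneg (c.E 0 - c.D 0)
        have hx : (c.E 1 - c.D 1)^2 = 0 := le_antisymm (by linarith) (sq_nonneg _)
        exact pow_eq_zero_iff two_ne_zero |>.mp hx
      funext i
      fin_cases i
      · show c.D 0 = c.E 0; linarith
      · show c.D 1 = c.E 1; linarith
  obtain ⟨ha, hb, hc, hd, hδ⟩ := statement13_key μ hμ
    (Mp 0 0 - Mm 0 0) (Mp 0 1 - Mm 0 1) (Mp 1 0 - Mm 1 0) (Mp 1 1 - Mm 1 1)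
    (qp - qm) (c.n 0) (c.n 1) (c.E 0 - c.D 0) (c.E 1 - c.D 1)
    hn hno hτ htr
    (by linear_combination hE0 - hD0)
    (by linear_combination hE1 - hD1)
    (by linear_combination e0)
    (by linear_combination e1)
  have hb0 : bp 0 = bm 0 := by linear_combination hD0 - c.D 0 * ha - c.D 1 * hb
  have hb1 : bp 1 = bm 1 := by linear_combination hD1 - c.D 0 * hc - c.D 1 * hd
  have hM : Mp = Mm := by
    ext i j
    fin_cases i <;> fin_cases j
    · show Mp 0 0 = Mm 0 0; linarith
    · show Mp 0 1 = Mm 0 1; linarith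
    · show Mp 1 0 = Mm 1 0; linarith
    · show Mp 1 1 = Mm 1 1; linarith
  have hbv : bp = bm := by
    funext i
    fin_cases i
    · exact hb0
    · exact hb1
  exact ⟨fun x => by rw [hM, hbv], by linarith⟩

end StokesIFE
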